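/- Let ε ∈ (0,1/4], ε₀ := (1−√(1−4ε))/2, p ∈ Δ(K), x a mixed action, and x' := c_{ε₀}(x,p). Then x' is a 6ε-convexification of x at p: there exist nonnegative reals (β_{i i'})_{i,i'∈I} such that (1) for all i ∈ I, p^{x'}(·|i) = ∑_{i'∈I} β_{i i'}·p^x(·|i'); (2) for all i ∈ I, x̄'^p(i) = x̄^p(i); (3) for all i' ∈ I, ∑_{i∈I} β_{i i'}·x̄^p(i) = x̄^p(i'); and (4) for all i ∈ I, ‖p^{x'}(·|i) − p^x(·|i)‖₁ ≤ 6ε. -/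

import Mathlib

open Finset

noncomputable section
open Classical

/-- `p` is an element of the probability simplex Δ(K). -/
def pSimplex {K : Type*} [Fintype K] (p : K → ℝ) : Prop :=
  (∀ k, 0 ≤ p k) ∧ ∑ k, p k = 1

/-- `x : K → Δ(I)` is a mixed action, written `x k i = x(i|k)`. -/
def MixedAction {K I : Type*} [Fintype K] [Fintype I] (x : K → I → ℝ) : Prop :=
  (∀ k i, 0 ≤ x k i) ∧ ∀ k, ∑ i, x k i = 1

/-- Marginal `x̄^p(i) = ∑_k p(k)·x(i|k)`. -/
def bar {K I : Type*} [Fintype K] (p : K → ℝ) (x : K → I → ℝ) (i : I) : ℝ :=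
  ∑ k, p k * x k i

/-- Posterior `p^x(k|i)`. -/
def post {K I : Type*} [Fintype K] (p : K → ℝ) (x : K → I → ℝ) (i : I) (k : K) : ℝ :=
  if bar p x i ≠ 0 then x k i * p k / bar p x i else p k

/-- The set `NR[x,ε,p]` of (x,ε)-non-revealing actions at p. -/
def NRset {K I : Type*} [Fintype K] [Fintype I] (x : K → I → ℝ) (ε : ℝ) (p : K → ℝ) :
    Finset I :=
  Finset.univ.filter fun i =>
    bar p x i ≠ 0 ∧ ∀ k, (1 - ε) * bar p x i ≤ x k i ∧ x k i ≤ (1 + ε) * bar p x i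

/-- The set `R[x,ε,p]` of (x,ε)-revealing actions at p. -/
def Rset {K I : Type*} [Fintype K] [Fintype I] (x : K → I → ℝ) (ε : ℝ) (p : K → ℝ) :
    Finset I :=
  (Finset.univ.filter fun i => bar p x i ≠ 0) \ NRset x ε p

/-- `x(A|k) = ∑_{i∈A} x(i|k)`. -/
def xOn {K I : Type*} (x : K → I → ℝ) (A : Finset I) (k : K) : ℝ := ∑ i ∈ A, x k i

/-- `x̄^p(A) = ∑_{i∈A} x̄^p(i)`. -/
def barOn {K I : Type*} [Fintype K] (p : K → ℝ) (x : K → I → ℝ) (A : Finset I) : ℝ :=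
  ∑ i ∈ A, bar p x i

/-- The ε-silent mapping `c_ε(x,p)`. -/
def silent {K I : Type*} [Fintype K] [Fintype I] (ε : ℝ) (x : K → I → ℝ) (p : K → ℝ) :
    K → I → ℝ :=
  fun k i =>
    if i ∈ NRset x ε p then
      ((1 - ε) * xOn x (NRset x ε p) k / barOn p x (NRset x ε p) + ε) * bar p x i
    else (1 - ε) * x k i + ε * bar p x i

section aux
variable {K I : Type*} [Fintype K] [Fintype I]

lemma bar_nonneg (p : K → ℝ) (hp : pSimplex p) (x : K → I → ℝ) (hx : MixedAction x) (i : I) :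
    0 ≤ bar p x i :=
  Finset.sum_nonneg fun k _ => mul_nonneg (hp.1 k) (hx.1 k i)

lemma sum_bar (p : K → ℝ) (hp : pSimplex p) (x : K → I → ℝ) (hx : MixedAction x) :
    ∑ i, bar p x i = 1 := by
  unfold bar
  rw [Finset.sum_comm]
  simp_rw [← Finset.mul_sum, hx.2, mul_one]
  exact hp.2

lemma bar_mul_post (p : K → ℝ) (hp : pSimplex p) (x : K → I → ℝ) (hx : MixedAction x)
    (i : I) (k : K) : bar p x i * post p x i k = x k i * p k := by
  unfold post
  by_cases h : bar p x i ≠ 0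
  · rw [if_pos h]; field_simp
  · rw [if_neg h]
    push_neg at h
    have h2 : p k * x k i = 0 := by
      have := (Finset.sum_eq_zero_iff_of_nonneg
        (fun k _ => mul_nonneg (hp.1 k) (hx.1 k i))).mp h k (Finset.mem_univ k)
      exact this
    rw [h, zero_mul]
    linarith [h2]

lemma sum_bar_mul_post (p : K → ℝ) (hp : pSimplex p) (x : K → I → ℝ) (hx : MixedAction x)
    (k : K) : ∑ i, bar p x i * post p x i k = p k := by
  simp_rw [bar_mul_post p hp x hx, ← Finset.sum_mul, hx.2, one_mul]

lemma post_nonneg (p : K → ℝ) (hp : pSimplex p) (x : K → I → ℝ) (hx : MixedAction x)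
    (i : I) (k : K) : 0 ≤ post p x i k := by
  unfold post
  split
  · exact div_nonneg (mul_nonneg (hx.1 k i) (hp.1 k)) (bar_nonneg p hp x hx i)
  · exact hp.1 k

lemma sum_post (p : K → ℝ) (x : K → I → ℝ) (i : I) (h : bar p x i ≠ 0) :
    ∑ k, post p x i k = 1 := by
  unfold post
  simp only [if_pos h]
  rw [← Finset.sum_div]
  rw [div_eq_one_iff_eq h]
  unfold bar
  exact Finset.sum_congr rfl fun k _ => mul_comm _ _

lemma sum_p_xOn (p : K → ℝ) (x : K → I → ℝ) (A : Finset I) :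
    ∑ k, p k * xOn x A k = barOn p x A := by
  unfold xOn barOn bar
  simp_rw [Finset.mul_sum]
  rw [Finset.sum_comm]

lemma barOn_pos (p : K → ℝ) (hp : pSimplex p) (x : K → I → ℝ) (hx : MixedAction x)
    {ε : ℝ} {i : I} (hi : i ∈ NRset x ε p) : 0 < barOn p x (NRset x ε p) := by
  have hib : bar p x i ≠ 0 := ((Finset.mem_filter.mp hi).2).1
  have h1 : 0 < bar p x i := lt_of_le_of_ne (bar_nonneg p hp x hx i) (Ne.symm hib)
  calc (0:ℝ) < bar p x i := h1
    _ ≤ barOn p x (NRset x ε p) :=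
      Finset.single_le_sum (fun j _ => bar_nonneg p hp x hx j) hi

lemma bar_silent (p : K → ℝ) (hp : pSimplex p) (x : K → I → ℝ) (hx : MixedAction x)
    (ε : ℝ) (i : I) : bar p (silent ε x p) i = bar p x i := by
  by_cases hi : i ∈ NRset x ε p
  · have hB : barOn p x (NRset x ε p) ≠ 0 := ne_of_gt (barOn_pos p hp x hx hi)
    unfold bar silent
    simp only [if_pos hi]
    have : ∀ k, p k * (((1 - ε) * xOn x (NRset x ε p) k / barOn p x (NRset x ε p) + ε)
        * bar p x i) = ((1 - ε) * (p k * xOn x (NRset x ε p) k) / barOn p x (NRset x ε p)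
          + ε * p k) * bar p x i := by
      intro k; ring
    simp_rw [this]
    rw [← Finset.sum_mul, Finset.sum_add_distrib, ← Finset.sum_div, ← Finset.mul_sum,
      sum_p_xOn, ← Finset.mul_sum, hp.2, mul_one]
    field_simp
    rw [sub_add_cancel, one_mul]; rfl
  · unfold bar silent
    simp only [if_neg hi]
    have e : ∀ k, p k * ((1 - ε) * x k i + ε * bar p x i)
        = (1 - ε) * (p k * x k i) + ε * bar p x i * p k := fun k => by ring
    simp_rw [e, Finset.sum_add_distrib, ← Finset.mul_sum]
    have h1 : ∑ k, p k * x k i = bar p x i := rfl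
    rw [h1, hp.2]; ring

end aux

section aux2
variable {K I : Type*} [Fintype K] [Fintype I]

lemma post_silent_mem (p : K → ℝ) (hp : pSimplex p) (x : K → I → ℝ) (hx : MixedAction x)
    (ε : ℝ) {i : I} (hi : i ∈ NRset x ε p) (k : K) :
    post p (silent ε x p) i k
      = ((1 - ε) * xOn x (NRset x ε p) k / barOn p x (NRset x ε p) + ε) * p k := by
  have hib : bar p x i ≠ 0 := ((Finset.mem_filter.mp hi).2).1
  have hb' : bar p (silent ε x p) i ≠ 0 := by rw [bar_silent p hp x hx]; exact hib
  unfold post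
  rw [if_pos hb', bar_silent p hp x hx]
  unfold silent
  rw [if_pos hi]
  field_simp

lemma post_silent_not_mem (p : K → ℝ) (hp : pSimplex p) (x : K → I → ℝ) (hx : MixedAction x)
    (ε : ℝ) {i : I} (hi : i ∉ NRset x ε p) (k : K) :
    post p (silent ε x p) i k = (1 - ε) * post p x i k + ε * p k := by
  unfold post
  rw [bar_silent p hp x hx]
  by_cases hib : bar p x i ≠ 0
  · rw [if_pos hib, if_pos hib]
    unfold silent
    rw [if_neg hi]
    field_simp
  · rw [if_neg hib, if_neg hib]
    ring

lemma eps0_facts (ε : ℝ) (hε0 : 0 < ε) (hε1 : ε ≤ 1/4) :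
    0 ≤ (1 - Real.sqrt (1 - 4*ε))/2 ∧ (1 - Real.sqrt (1 - 4*ε))/2 ≤ 2*ε ∧
      (1 - Real.sqrt (1 - 4*ε))/2 ≤ 1/2 := by
  have hs0 : (0:ℝ) ≤ 1 - 4*ε := by linarith
  have hnn := Real.sqrt_nonneg (1 - 4*ε)
  have hsq : Real.sqrt (1-4*ε) * Real.sqrt (1-4*ε) = 1-4*ε := Real.mul_self_sqrt hs0
  have hle1 : Real.sqrt (1-4*ε) ≤ 1 := by nlinarith [sq_nonneg (Real.sqrt (1-4*ε) - 1)]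
  refine ⟨by linarith, ?_, by linarith⟩
  nlinarith [mul_nonneg hnn (sub_nonneg.mpr hle1)]

end aux2

/-- x' = c_{ε₀}(x,p) is a 6ε-convexification of x at p. -/
theorem silent_is_convexification {K I : Type*} [Fintype K] [Fintype I] [Nonempty K] [Nonempty I]
    (ε : ℝ) (hε0 : 0 < ε) (hε1 : ε ≤ 1/4)
    (p : K → ℝ) (hp : pSimplex p)
    (x : K → I → ℝ) (hx : MixedAction x) :
    ∃ β : I → I → ℝ,
      (∀ i i', 0 ≤ β i i') ∧
      (∀ (i : I) (k : K),
        post p (silent ((1 - Real.sqrt (1 - 4*ε))/2) x p) i k = ∑ i', β i i' * post p x i' k) ∧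
      (∀ i : I, bar p (silent ((1 - Real.sqrt (1 - 4*ε))/2) x p) i = bar p x i) ∧
      (∀ i' : I, ∑ i, β i i' * bar p x i = bar p x i') ∧
      (∀ i : I,
        ∑ k, |post p (silent ((1 - Real.sqrt (1 - 4*ε))/2) x p) i k - post p x i k| ≤ 6 * ε) := by
  obtain ⟨hε₀0, hε₀le, hε₀half⟩ := eps0_facts ε hε0 hε1
  set ε₀ := (1 - Real.sqrt (1 - 4*ε))/2 with hε₀def
  set N := NRset x ε₀ p with hNdef
  set B := barOn p x N with hBdef
  have hBnn : 0 ≤ B := Finset.sum_nonneg fun j _ => bar_nonneg p hp x hx j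
  refine ⟨fun i i' => if i ∈ N then
        (1-ε₀) * (if i' ∈ N then bar p x i' / B else 0) + ε₀ * bar p x i'
      else (if i' = i then (1-ε₀) else 0) + ε₀ * bar p x i', ?_, ?_, ?_, ?_, ?_⟩
  · -- nonnegativity
    intro i i'
    have hb := bar_nonneg p hp x hx i'
    dsimp only
    split_ifs <;>
      nlinarith [mul_nonneg (show (0:ℝ) ≤ 1-ε₀ by linarith) (div_nonneg hb hBnn),
        mul_nonneg hε₀0 hb]
  · -- post identity
    intro i k
    have key := sum_bar_mul_post p hp x hx k
    have keyN : ∑ i' ∈ N, bar p x i' * post p x i' k = xOn x N k * p k := by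
      simp_rw [bar_mul_post p hp x hx, ← Finset.sum_mul]
      rfl
    by_cases hi : i ∈ N
    · rw [post_silent_mem p hp x hx ε₀ hi k]
      have hB : B ≠ 0 := ne_of_gt (barOn_pos p hp x hx hi)
      simp only [if_pos hi]
      have e : ∀ i', ((1-ε₀) * (if i' ∈ N then bar p x i' / B else 0) + ε₀ * bar p x i')
            * post p x i' k
          = (1-ε₀) * ((if i' ∈ N then bar p x i' * post p x i' k else 0)/B)
            + ε₀ * (bar p x i' * post p x i' k) := by
        intro i'; split_ifs <;> ring
      simp_rw [e]
      rw [Finset.sum_add_distrib, ← Finset.mul_sum, ← Finset.mul_sum, ← Finset.sum_div,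
        Finset.sum_ite_mem, Finset.univ_inter, keyN, key]
      rw [← hNdef, ← hBdef]
      field_simp
    · rw [post_silent_not_mem p hp x hx ε₀ hi k]
      simp only [if_neg hi]
      have e : ∀ i', ((if i' = i then (1-ε₀) else 0) + ε₀ * bar p x i') * post p x i' k
          = (if i' = i then (1-ε₀) * post p x i' k else 0)
            + ε₀ * (bar p x i' * post p x i' k) := by
        intro i'; split_ifs <;> ring
      simp_rw [e]
      rw [Finset.sum_add_distrib, Finset.sum_ite_eq' Finset.univ i
        (fun i' => (1-ε₀) * post p x i' k), ← Finset.mul_sum, key]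
      simp
  · -- marginals preserved
    exact fun i => bar_silent p hp x hx ε₀ i
  · -- dual stochasticity
    intro i'
    have e : ∀ i, (if i ∈ N then
          (1-ε₀) * (if i' ∈ N then bar p x i' / B else 0) + ε₀ * bar p x i'
        else (if i' = i then (1-ε₀) else 0) + ε₀ * bar p x i') * bar p x i
        = (if i ∈ N then (1-ε₀) * (if i' ∈ N then bar p x i' / B else 0) * bar p x i
            else (if i' = i then (1-ε₀) * bar p x i else 0))
          + ε₀ * bar p x i' * bar p x i := by
      intro i; split_ifs <;> ring
    simp_rw [e]
    rw [Finset.sum_add_distrib, ← Finset.mul_sum, sum_bar p hp x hx, mul_one]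
    rw [Finset.sum_ite, Finset.filter_mem_eq_inter, Finset.univ_inter]
    rw [← Finset.mul_sum]
    have hsum : ∑ i ∈ N, bar p x i = B := rfl
    rw [hsum]
    rw [Finset.sum_ite_eq (Finset.univ.filter (· ∉ N)) i' (fun i => (1-ε₀) * bar p x i)]
    by_cases hi' : i' ∈ N
    · have hB : B ≠ 0 := ne_of_gt (barOn_pos p hp x hx hi')
      rw [if_pos hi', if_neg (by simp [Finset.mem_filter, hi'])]
      field_simp
      ring
    · rw [if_neg hi', if_pos (by simp [Finset.mem_filter, hi'])]
      ring
  · -- L1 bound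
    intro i
    by_cases hi : i ∈ N
    · -- non-revealing case
      obtain ⟨hib, hbnd⟩ := (Finset.mem_filter.mp hi).2
      have hbpos : 0 < bar p x i := lt_of_le_of_ne (bar_nonneg p hp x hx i) (Ne.symm hib)
      have hBpos : 0 < B := barOn_pos p hp x hx hi
      have hOn : ∀ k, (1-ε₀)*B ≤ xOn x N k ∧ xOn x N k ≤ (1+ε₀)*B := by
        intro k
        constructor
        · rw [hBdef]
          unfold barOn xOn
          rw [Finset.mul_sum]
          exact Finset.sum_le_sum fun j hj => ((Finset.mem_filter.mp hj).2.2 k).1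
        · rw [hBdef]
          unfold barOn xOn
          rw [Finset.mul_sum]
          exact Finset.sum_le_sum fun j hj => ((Finset.mem_filter.mp hj).2.2 k).2
      have hk : ∀ k, |post p (silent ε₀ x p) i k - post p x i k| ≤ 2*ε₀ * p k := by
        intro k
        rw [post_silent_mem p hp x hx ε₀ hi k]
        have hpost : post p x i k = x k i * p k / bar p x i := by
          unfold post; rw [if_pos hib]
        rw [hpost]
        set u := xOn x N k / B with hu
        set v := x k i / bar p x i with hv
        have hu1 : 1 - ε₀ ≤ u := (le_div_iff₀ hBpos).mpr (hOn k).1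
        have hu2 : u ≤ 1 + ε₀ := (div_le_iff₀ hBpos).mpr (hOn k).2
        have hv1 : 1 - ε₀ ≤ v := (le_div_iff₀ hbpos).mpr (hbnd k).1
        have hv2 : v ≤ 1 + ε₀ := (div_le_iff₀ hbpos).mpr (hbnd k).2
        have e1 : (1-ε₀) * xOn x N k / B + ε₀ = (1-ε₀)*u + ε₀ := by
          rw [hu, mul_div_assoc]
        have e2 : x k i * p k / bar p x i = v * p k := by
          rw [hv, div_mul_eq_mul_div]
        rw [e1, e2]
        have hc : |(1-ε₀)*u + ε₀ - v| ≤ 2*ε₀ := by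
          rw [abs_le]
          constructor <;> nlinarith
        have e3 : ((1-ε₀)*u + ε₀) * p k - v * p k = ((1-ε₀)*u + ε₀ - v) * p k := by ring
        rw [e3, abs_mul, abs_of_nonneg (hp.1 k)]
        exact mul_le_mul_of_nonneg_right hc (hp.1 k)
      calc ∑ k, |post p (silent ε₀ x p) i k - post p x i k| ≤ ∑ k, 2*ε₀ * p k :=
            Finset.sum_le_sum fun k _ => hk k
        _ = 2*ε₀ := by rw [← Finset.mul_sum, hp.2, mul_one]
        _ ≤ 6*ε := by linarith
    · -- revealing / zero case
      by_cases hib : bar p x i = 0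
      · have hz : ∀ k, post p (silent ε₀ x p) i k - post p x i k = 0 := by
          intro k
          unfold post
          rw [bar_silent p hp x hx]
          simp [hib]
        simp only [hz, abs_zero, Finset.sum_const_zero]
        linarith
      · have hk : ∀ k, |post p (silent ε₀ x p) i k - post p x i k|
            ≤ ε₀ * (p k + post p x i k) := by
          intro k
          rw [post_silent_not_mem p hp x hx ε₀ hi k]
          have e : (1-ε₀) * post p x i k + ε₀ * p k - post p x i k
              = ε₀ * (p k - post p x i k) := by ring
          rw [e, abs_mul, abs_of_nonneg hε₀0]
          have h1 : |p k - post p x i k| ≤ p k + post p x i k := by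
            rw [abs_le]
            constructor <;>
              nlinarith [post_nonneg p hp x hx i k, hp.1 k]
          exact mul_le_mul_of_nonneg_left h1 hε₀0
        calc ∑ k, |post p (silent ε₀ x p) i k - post p x i k|
            ≤ ∑ k, ε₀ * (p k + post p x i k) := Finset.sum_le_sum fun k _ => hk k
          _ = ε₀ * 2 := by
              rw [← Finset.mul_sum, Finset.sum_add_distrib, hp.2, sum_post p x i hib]
              norm_num
          _ ≤ 6*ε := by linarith
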